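/- In the heavy-tail model with auxiliary function ε, the conditional quantile function q(·|x) (the generalized inverse of F̄(·|x)) satisfies: for sequences 0 < β_n < α_n with α_n → 0, |log q(β_n|x) − log q(α_n|x) + γ(x) log(β_n/α_n)| = O(log(α_n/β_n) · ε(q(α_n|x)|x)) as n → ∞. -/

import Mathlib

open Filter Real

set_option maxHeartbeats 1000000 in
theorem stmt_3 (γ c : ℝ) (hγ : 0 < γ) (hc : 0 < c)
    (ε : ℝ → ℝ) (hε_cont : Continuous ε)
    (hε_decr : ∃ u₁ : ℝ, AntitoneOn (fun u => |ε u|) (Set.Ici u₁))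
    (hε_lim : Tendsto ε atTop (nhds 0))
    (Fbar : ℝ → ℝ)
    (hF : ∀ y ≥ (1:ℝ), Fbar y = c * Real.exp (-(∫ u in (1:ℝ)..y, (1/γ - ε u) / u)))
    (q : ℝ → ℝ) (α₀ : ℝ) (hα₀ : 0 < α₀)
    (hq : ∀ a ∈ Set.Ioo (0:ℝ) α₀, Fbar (q a) = a)
    (hq_top : Tendsto q (nhdsWithin 0 (Set.Ioi 0)) atTop)
    (α β : ℕ → ℝ)
    (hαβ : ∀ n, 0 < β n ∧ β n < α n)
    (hα0 : Tendsto α atTop (nhds 0)) (hαpos : ∀ n, 0 < α n) :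
    ∃ C > (0:ℝ), ∀ᶠ n in atTop,
      |Real.log (q (β n)) - Real.log (q (α n)) + γ * Real.log (β n / α n)|
        ≤ C * (Real.log (α n / β n) * |ε (q (α n))|) := by
  obtain ⟨u₁, hu₁⟩ := hε_decr
  have hγ2 : (0:ℝ) < 1/(2*γ) := by positivity
  have hsmall : ∀ᶠ u in atTop, |ε u| < 1/(2*γ) := by
    have h := Metric.tendsto_nhds.mp hε_lim (1/(2*γ)) hγ2
    simpa [Real.dist_eq] using h
  obtain ⟨T₂, hT₂⟩ := eventually_atTop.mp hsmall
  set T : ℝ := max 1 (max u₁ T₂) with hT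
  have hT1 : (1:ℝ) ≤ T := le_max_left _ _
  have hTu₁ : u₁ ≤ T := le_trans (le_max_left _ _) (le_max_right _ _)
  have hTT₂ : T₂ ≤ T := le_trans (le_max_right _ _) (le_max_right _ _)
  clear_value T
  -- integrability helper
  have hint : ∀ (g : ℝ → ℝ), Continuous g → ∀ s t : ℝ, 1 ≤ s → 1 ≤ t →
      IntervalIntegrable (fun u => g u / u) MeasureTheory.volume s t := by
    intro g hg s t hs ht
    apply ContinuousOn.intervalIntegrable
    apply ContinuousOn.div hg.continuousOn continuousOn_id
    intro u hu
    rw [Set.uIcc_eq_union] at hu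
    have h1 : (1:ℝ) ≤ u := by
      rcases hu with hu | hu
      · exact le_trans hs hu.1
      · exact le_trans ht hu.1
    intro h0; simp only [id_eq] at h0; linarith
  have hfint : ∀ s t : ℝ, 1 ≤ s → 1 ≤ t →
      IntervalIntegrable (fun u => (1/γ - ε u) / u) MeasureTheory.volume s t :=
    hint (fun u => 1/γ - ε u) (continuous_const.sub hε_cont)
  -- key identity
  have key : ∀ a ∈ Set.Ioo (0:ℝ) α₀, 1 ≤ q a →
      (∫ u in (1:ℝ)..(q a), (1/γ - ε u) / u) = Real.log c - Real.log a := by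
    intro a ha hqa
    have h1 : c * Real.exp (-(∫ u in (1:ℝ)..(q a), (1/γ - ε u) / u)) = a := by
      rw [← hF (q a) hqa]; exact hq a ha
    have h2 : Real.exp (-(∫ u in (1:ℝ)..(q a), (1/γ - ε u) / u)) = a / c := by
      field_simp at h1 ⊢
      linarith [h1]
    have h3 : -(∫ u in (1:ℝ)..(q a), (1/γ - ε u) / u) = Real.log (a / c) := by
      rw [← h2, Real.log_exp]
    rw [Real.log_div (ne_of_gt ha.1) (ne_of_gt hc)] at h3
    linarith
  -- limits
  have hαin : Tendsto α atTop (nhdsWithin 0 (Set.Ioi 0)) :=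
    tendsto_nhdsWithin_of_tendsto_nhds_of_eventually_within α hα0
      (Eventually.of_forall hαpos)
  have hqα : Tendsto (fun n => q (α n)) atTop atTop := hq_top.comp hαin
  have hβ0 : Tendsto β atTop (nhds 0) :=
    squeeze_zero (fun n => (hαβ n).1.le) (fun n => (hαβ n).2.le) hα0
  have hβin : Tendsto β atTop (nhdsWithin 0 (Set.Ioi 0)) :=
    tendsto_nhdsWithin_of_tendsto_nhds_of_eventually_within β hβ0
      (Eventually.of_forall fun n => (hαβ n).1)
  have hqβ : Tendsto (fun n => q (β n)) atTop atTop := hq_top.comp hβin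
  refine ⟨2*γ^2, by positivity, ?_⟩
  filter_upwards [hα0.eventually (gt_mem_nhds hα₀), hqα.eventually_ge_atTop T,
    hqβ.eventually_ge_atTop T] with n hαlt hqαT hqβT
  obtain ⟨hβpos, hβα⟩ := hαβ n
  have hαp := hαpos n
  have hβlt : β n < α₀ := lt_trans hβα hαlt
  set A := q (α n) with hA
  set B := q (β n) with hB
  clear_value A B
  have hA1 : (1:ℝ) ≤ A := le_trans hT1 hqαT
  have hB1 : (1:ℝ) ≤ B := le_trans hT1 hqβT
  have hA0 : (0:ℝ) < A := lt_of_lt_of_le one_pos hA1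
  have hB0 : (0:ℝ) < B := lt_of_lt_of_le one_pos hB1
  have hIa : (∫ u in (1:ℝ)..A, (1/γ - ε u) / u) = Real.log c - Real.log (α n) := by
    rw [hA]; exact key (α n) ⟨hαp, hαlt⟩ (hA ▸ hA1)
  have hIb : (∫ u in (1:ℝ)..B, (1/γ - ε u) / u) = Real.log c - Real.log (β n) := by
    rw [hB]; exact key (β n) ⟨hβpos, hβlt⟩ (hB ▸ hB1)
  have hadd : (∫ u in (1:ℝ)..A, (1/γ - ε u) / u) + (∫ u in A..B, (1/γ - ε u) / u)
      = ∫ u in (1:ℝ)..B, (1/γ - ε u) / u :=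
    intervalIntegral.integral_add_adjacent_intervals (hfint 1 A le_rfl hA1)
      (hfint A B hA1 hB1)
  have hsplit : (∫ u in A..B, (1/γ - ε u) / u) = Real.log (α n) - Real.log (β n) := by
    rw [hIa, hIb] at hadd; linarith
  set I : ℝ := Real.log (α n) - Real.log (β n) with hIdef
  clear_value I
  have hI : 0 < I := by rw [hIdef]; exact sub_pos.2 (Real.log_lt_log hβpos hβα)
  -- A ≤ B
  have hAB : A ≤ B := by
    by_contra hBA
    push_neg at hBA
    have hnn : 0 ≤ ∫ u in B..A, (1/γ - ε u) / u := by
      apply intervalIntegral.integral_nonneg hBA.le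
      intro u hu
      have huT : T ≤ u := le_trans hqβT hu.1
      have hu0 : (0:ℝ) < u := lt_of_lt_of_le (lt_of_lt_of_le one_pos hT1) huT
      have hsu : |ε u| < 1/(2*γ) := hT₂ u (le_trans hTT₂ huT)
      have hεu : ε u ≤ 1/(2*γ) := le_of_lt (lt_of_le_of_lt (le_abs_self _) hsu)
      apply div_nonneg _ hu0.le
      have h12 : 1/(2*γ) ≤ 1/γ := by
        rw [div_le_div_iff₀ (by positivity) hγ]; nlinarith
      linarith
    have hsym : (∫ u in B..A, (1/γ - ε u) / u) = -∫ u in A..B, (1/γ - ε u) / u :=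
      intervalIntegral.integral_symm A B
    rw [hsym, hsplit] at hnn
    linarith
  -- log integral
  have hone : (∫ u in A..B, (1:ℝ)/u) = Real.log B - Real.log A := by
    rw [integral_one_div (by
      intro h0
      rw [Set.uIcc_eq_union] at h0
      rcases h0 with h0 | h0 <;> linarith [h0.1])]
    rw [Real.log_div (ne_of_gt hB0) (ne_of_gt hA0)]
  set L : ℝ := Real.log B - Real.log A with hLdef
  clear_value L
  have hL0 : 0 ≤ L := by rw [hLdef]; exact sub_nonneg.2 (Real.log_le_log hA0 hAB)
  set E : ℝ := ∫ u in A..B, ε u / u with hEdef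
  clear_value E
  have hfeq : ∀ u : ℝ, (1/γ - ε u) / u = (1/γ) * (1/u) - ε u / u := by
    intro u
    rw [sub_div, div_eq_mul_one_div (1/γ) u]
  have hESplit : (∫ u in A..B, (1/γ - ε u) / u) = (1/γ) * L - E := by
    have h1 : IntervalIntegrable (fun u => (1/γ) * (1/u)) MeasureTheory.volume A B := by
      simpa [mul_one_div, div_eq_mul_inv] using hint (fun _ => 1/γ) continuous_const A B hA1 hB1
    have h2 : IntervalIntegrable (fun u => ε u / u) MeasureTheory.volume A B :=
      hint ε hε_cont A B hA1 hB1
    calc (∫ u in A..B, (1/γ - ε u) / u)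
        = ∫ u in A..B, ((1/γ) * (1/u) - ε u / u) := by
          congr 1; funext u; exact hfeq u
      _ = (∫ u in A..B, (1/γ) * (1/u)) - ∫ u in A..B, ε u / u :=
          intervalIntegral.integral_sub h1 h2
      _ = (1/γ) * L - E := by
          rw [intervalIntegral.integral_const_mul, hone, ← hEdef]
  -- bound on E
  have hεA : |ε A| ≤ 1/(2*γ) := (hT₂ A (le_trans hTT₂ hqαT)).le
  have hEbound : |E| ≤ |ε A| * L := by
    have habs : |E| ≤ ∫ u in A..B, |ε u / u| := by
      rw [hEdef]; exact intervalIntegral.abs_integral_le_integral_abs hAB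
    have hmono : (∫ u in A..B, |ε u / u|) ≤ ∫ u in A..B, |ε A| * (1/u) := by
      apply intervalIntegral.integral_mono_on hAB
      · exact (hint ε hε_cont A B hA1 hB1).abs
      · simpa [mul_one_div, div_eq_mul_inv] using hint (fun _ => |ε A|) continuous_const A B hA1 hB1
      · intro u hu
        have hu0 : (0:ℝ) < u := lt_of_lt_of_le hA0 hu.1
        have hAu₁ : A ∈ Set.Ici u₁ := le_trans hTu₁ hqαT
        have huu₁ : u ∈ Set.Ici u₁ := le_trans hAu₁ hu.1
        have hle : |ε u| ≤ |ε A| := hu₁ hAu₁ huu₁ hu.1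
        rw [abs_div, abs_of_pos hu0, mul_one_div]
        gcongr
    have hconst : (∫ u in A..B, |ε A| * (1/u)) = |ε A| * L := by
      rw [intervalIntegral.integral_const_mul, hone]
    rw [hconst] at hmono
    exact habs.trans hmono
  -- combine
  have hkey2 : γ * E = L - γ * I := by
    have h := hESplit
    rw [hsplit] at h
    have h' : γ * ((1/γ) * L - E) = γ * I := by rw [h]
    rw [mul_sub, ← mul_assoc, mul_one_div_cancel hγ.ne', one_mul] at h'
    linarith
  have h1 : γ * |E| ≤ γ * (|ε A| * L) := mul_le_mul_of_nonneg_left hEbound hγ.le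
  have h2 : γ * (|ε A| * L) ≤ γ * ((1/(2*γ)) * L) := by
    apply mul_le_mul_of_nonneg_left _ hγ.le
    exact mul_le_mul_of_nonneg_right hεA hL0
  have h3 : γ * ((1/(2*γ)) * L) = (1/2) * L := by field_simp
  have hγE : γ * |E| ≤ (1/2) * L := le_of_le_of_eq (h1.trans h2) h3
  have habsγE : γ * E ≤ γ * |E| := mul_le_mul_of_nonneg_left (le_abs_self E) hγ.le
  have hL2 : L ≤ 2*γ*I := by linarith
  have hlogβα : Real.log (β n / α n) = Real.log (β n) - Real.log (α n) :=
    Real.log_div hβpos.ne' hαp.ne'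
  have hlogαβ : Real.log (α n / β n) = I := by
    rw [hIdef]; exact Real.log_div hαp.ne' hβpos.ne'
  have hexpr : L + γ * Real.log (β n / α n) = γ * E := by
    rw [hlogβα, hkey2, hIdef]; ring
  have h6 := mul_le_mul_of_nonneg_left hL2 (mul_nonneg hγ.le (abs_nonneg (ε A)))
  calc |L + γ * Real.log (β n / α n)|
      = |γ * E| := by rw [hexpr]
    _ = γ * |E| := by rw [abs_mul, abs_of_pos hγ]
    _ ≤ γ * (|ε A| * L) := h1
    _ ≤ 2*γ^2 * (I * |ε A|) := by
        have h7 : γ * (|ε A| * L) = γ * |ε A| * L := by ring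
        have h8 : γ * |ε A| * (2*γ*I) = 2*γ^2 * (I * |ε A|) := by ring
        rw [h7, ← h8]; exact h6
    _ = 2*γ^2 * (Real.log (α n / β n) * |ε A|) := by rw [hlogαβ]
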